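/- Let H be a real m×n matrix with full column rank n, and let S_A ⊆ {1,…,m} be a set of meter (row) indices. There exists a nonzero covert attack vector, i.e. a nonzero a ∈ ℝ^m such that a = Hy for some y ∈ ℝⁿ and a_i = 0 for every i ∉ S_A, if and only if the submatrix of H obtained by deleting all rows with indices in S_A does not have full column rank n (i.e., the network becomes unobservable when the adversary meters are removed). -/

import Mathlib

open Matrix


lemma rank_eq_iff_inj {k : Type*} [Fintype k] {n : ℕ} (A : Matrix k (Fin n) ℝ) :
    A.rank = n ↔ Function.Injective A.mulVec := by
  have h := LinearMap.finrank_range_add_finrank_ker (A.mulVecLin)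
  have hn : Module.finrank ℝ (Fin n → ℝ) = n := by simp
  rw [hn] at h
  constructor
  · intro hr
    have : Module.finrank ℝ (LinearMap.ker A.mulVecLin) = 0 := by
      unfold Matrix.rank at hr; omega
    have hker : LinearMap.ker A.mulVecLin = ⊥ :=
      Submodule.finrank_eq_zero.mp this
    have := LinearMap.ker_eq_bot.mp hker
    simpa [Matrix.coe_mulVecLin] using this
  · intro hi
    have hker : LinearMap.ker A.mulVecLin = ⊥ := LinearMap.ker_eq_bot.mpr (by simpa [Matrix.coe_mulVecLin] using hi)
    rw [hker] at h
    simpa [Matrix.rank] using h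

/-- **Covert attack feasibility (Theorem 1, existence part).**
For a DC measurement matrix `H` with full column rank `n` and a set `SA` of adversary
meters, there exists a nonzero covert attack vector (a vector `a = H y` supported on `SA`)
if and only if the matrix obtained from `H` by deleting the rows indexed by `SA` does not
have full column rank `n`. -/
theorem covert_attack_exists_iff_unobservable {m n : ℕ}
    (H : Matrix (Fin m) (Fin n) ℝ) (hH : H.rank = n) (SA : Finset (Fin m)) :
    (∃ a : Fin m → ℝ, a ≠ 0 ∧ (∃ y : Fin n → ℝ, a = H.mulVec y) ∧
        ∀ i ∉ SA, a i = 0) ↔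
      (H.submatrix (fun i : {i : Fin m // i ∉ SA} => (i : Fin m)) id).rank ≠ n := by
  have hHinj : Function.Injective H.mulVec := (rank_eq_iff_inj H).mp hH
  set S := H.submatrix (fun i : {i : Fin m // i ∉ SA} => (i : Fin m)) id with hS
  have hsub : ∀ (y : Fin n → ℝ) (i : {i : Fin m // i ∉ SA}),
      S.mulVec y i = H.mulVec y (i : Fin m) := by
    intro y i; simp [hS, Matrix.mulVec, Matrix.submatrix, dotProduct]
  rw [Ne, rank_eq_iff_inj]
  constructor
  · rintro ⟨a, ha, ⟨y, rfl⟩, hsupp⟩ hinj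
    have hy : y = 0 := by
      apply hinj
      ext i
      rw [hsub, Matrix.mulVec_zero]
      exact hsupp i i.2
    exact ha (by rw [hy, Matrix.mulVec_zero])
  · intro hninj
    obtain ⟨u, v, huv, hne⟩ := Function.not_injective_iff.mp hninj
    have hy : u - v ≠ 0 := sub_ne_zero.mpr hne
    refine ⟨H.mulVec (u - v), ?_, ⟨u - v, rfl⟩, ?_⟩
    · intro h0
      exact hy (hHinj (by rw [h0, Matrix.mulVec_zero]))
    · intro i hi
      have := congrFun huv ⟨i, hi⟩
      rw [hsub, hsub] at this
      have h2 : (H *ᵥ (u - v)) i = (H *ᵥ u) i - (H *ᵥ v) i := by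
        simp [Matrix.mulVec_sub]
      rw [h2, this, sub_self]
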